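/- Let A → B be a local homomorphism of Noetherian local rings with k the residue field of A, and u ∈ B. Then the following are equivalent: (1) u is a nonzerodivisor in B and B/uB is flat over A; (2) the image of u in B ⊗_A k is a nonzerodivisor. -/

import Mathlib

open scoped TensorProduct

/-!
STATEMENT 6. Let `A → B` be a local homomorphism of Noetherian local rings, `B`
flat over `A`, `k` the residue field of `A`, and `u ∈ B`.  Then the following are
equivalent:
(1) `u` is a nonzerodivisor in `B` and `B/uB` is flat over `A`;
(2) the image of `u` in `B ⊗_A k` is a nonzerodivisor.
-/

open LinearMap IsLocalRing

set_option linter.unusedSectionVars false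

section Auxiliary

variable {A : Type*} [CommRing A]

/-- The multiplication map `N ⊗[A] M → M` for an ideal `N`. -/
noncomputable def iot (N : Ideal A) (M : Type*) [AddCommGroup M] [Module A M] :
    N ⊗[A] M →ₗ[A] M :=
  TensorProduct.lift (LinearMap.lsmul A M ∘ₗ N.subtype)

@[simp] lemma iot_tmul (N : Ideal A) {M : Type*} [AddCommGroup M] [Module A M]
    (n : N) (x : M) : iot N M (n ⊗ₜ x) = (n : A) • x := rfl

lemma iot_eq (N : Ideal A) (M : Type*) [AddCommGroup M] [Module A M] :
    iot N M = (TensorProduct.lid A M).toLinearMap ∘ₗ LinearMap.rTensor M N.subtype :=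
  TensorProduct.ext' fun _ _ => rfl

lemma iot_injective (N : Ideal A) (M : Type*) [AddCommGroup M] [Module A M]
    [Module.Flat A M] : Function.Injective (iot N M) := by
  rw [iot_eq]
  exact (TensorProduct.lid A M).injective.comp
    (Module.Flat.iff_rTensor_injective'.mp (inferInstance : Module.Flat A M) N)

lemma range_iot (N : Ideal A) (M : Type*) [AddCommGroup M] [Module A M] :
    LinearMap.range (iot N M) = N • (⊤ : Submodule A M) := by
  apply le_antisymm
  · rintro _ ⟨z, rfl⟩
    induction z using TensorProduct.induction_on with
    | zero => simp
    | tmul n x => exact Submodule.smul_mem_smul n.2 trivial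
    | add x y hx hy => rw [map_add]; exact Submodule.add_mem _ hx hy
  · refine Submodule.smul_le.mpr fun a ha x _ => ⟨(⟨a, ha⟩ : N) ⊗ₜ x, rfl⟩

lemma iot_naturality {N : Ideal A} {M M' : Type*} [AddCommGroup M] [Module A M]
    [AddCommGroup M'] [Module A M'] (f : M →ₗ[A] M') (x : N ⊗[A] M) :
    iot N M' (LinearMap.lTensor N f x) = f (iot N M x) := by
  induction x using TensorProduct.induction_on with
  | zero => simp
  | tmul n x => simp
  | add x y hx hy => simp [hx, hy]

lemma iot_inclusion {N N' : Ideal A} (h : N' ≤ N) {M : Type*} [AddCommGroup M] [Module A M]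
    (y : N' ⊗[A] M) :
    iot N M (LinearMap.rTensor M (Submodule.inclusion h) y) = iot N' M y := by
  induction y using TensorProduct.induction_on with
  | zero => simp
  | tmul n x => rfl
  | add x y hx hy => simp [hx, hy]

end Auxiliary

/-- The `A`-linear quotient map `B → B ⧸ (u)`. -/
noncomputable def mkC (A : Type*) [CommRing A] {B : Type*} [CommRing B] [Algebra A B] (u : B) :
    B →ₗ[A] (B ⧸ Ideal.span {u}) :=
  LinearMap.restrictScalars A (Ideal.span {u}).mkQ

@[simp] lemma mkC_apply (A : Type*) [CommRing A] {B : Type*} [CommRing B] [Algebra A B] (u : B)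
    (x : B) : mkC A u x = Ideal.Quotient.mk (Ideal.span {u}) x := rfl

lemma mkC_mul_eq_zero (A : Type*) [CommRing A] {B : Type*} [CommRing B] [Algebra A B] (u x : B) :
    mkC A u (u * x) = 0 := by
  rw [mkC_apply, Ideal.Quotient.eq_zero_iff_mem]
  exact Ideal.mem_span_singleton'.mpr ⟨x, mul_comm x u⟩


section Main

variable {A B : Type*} [CommRing A] [CommRing B]
    [IsNoetherianRing A] [IsNoetherianRing B] [IsLocalRing A] [IsLocalRing B]
    [Algebra A B] [IsLocalHom (algebraMap A B)] [Module.Flat A B] (u : B)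

local notation "m" => IsLocalRing.maximalIdeal A
local notation "k" => IsLocalRing.ResidueField A

/-- If `u` is regular on `B ⊗ k` (phrased elementwise), then for any `k`-module `X`,
multiplication by `u` is injective on `X ⊗[A] B`. -/
lemma claimC (hP : ∀ b : B, u * b ∈ m • (⊤ : Submodule A B) → b ∈ m • (⊤ : Submodule A B))
    (X : Type*) [AddCommGroup X] [Module A X] [Module k X] [IsScalarTower A k X] :
    Function.Injective (LinearMap.lTensor X (LinearMap.mulLeft A u)) := by
  classical
  set V := k ⊗[A] B with hV
  -- every element of V is 1 ⊗ b
  have hsur : ∀ v : V, ∃ b : B, v = (1 : k) ⊗ₜ[A] b := by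
    intro v
    induction v using TensorProduct.induction_on with
    | zero => exact ⟨0, (TensorProduct.tmul_zero _ _).symm⟩
    | tmul c b =>
        obtain ⟨a, rfl⟩ := Ideal.Quotient.mk_surjective c
        refine ⟨a • b, ?_⟩
        rw [← TensorProduct.smul_tmul]
        congr 1
        rw [← Ideal.Quotient.algebraMap_eq, Algebra.algebraMap_eq_smul_one]
        rfl
    | add v w hv hw =>
        obtain ⟨b₁, rfl⟩ := hv
        obtain ⟨b₂, rfl⟩ := hw
        exact ⟨b₁ + b₂, (TensorProduct.tmul_add _ _ _).symm⟩
  have hker : ∀ b : B, ((1 : k) ⊗ₜ[A] b = (0 : V)) ↔ b ∈ m • (⊤ : Submodule A B) := by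
    intro b
    have h1 : (TensorProduct.quotTensorEquivQuotSMul B m) ((1 : k) ⊗ₜ[A] b)
        = Submodule.Quotient.mk b := by
      rw [show (1 : k) = Ideal.Quotient.mk m 1 from (map_one _).symm,
        TensorProduct.quotTensorEquivQuotSMul_mk_tmul, one_smul]
    rw [← Submodule.Quotient.mk_eq_zero, ← h1, LinearEquiv.map_eq_zero_iff]
    rfl
  -- multiplication by 1 ⊗ u on V, as a k-linear map
  set μ : V →ₗ[k] V := LinearMap.mulLeft k ((1 : k) ⊗ₜ[A] u) with hμdef
  have hμ : Function.Injective μ := by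
    rw [injective_iff_map_eq_zero]
    intro v hv
    obtain ⟨b, rfl⟩ := hsur v
    have : ((1 : k) ⊗ₜ[A] (u * b) : V) = 0 := by
      rw [← hv, hμdef, LinearMap.mulLeft_apply, Algebra.TensorProduct.tmul_mul_tmul, one_mul]
    rw [hker] at this ⊢
    exact hP b this
  have hflat : Module.Flat k X := inferInstance
  have hinj2 : Function.Injective (LinearMap.lTensor X μ) :=
    Module.Flat.lTensor_preserves_injective_linearMap μ hμ
  set e := TensorProduct.AlgebraTensorModule.cancelBaseChange A k k X B with he
  have hcomm : ∀ z : X ⊗[k] V,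
      e (LinearMap.lTensor X μ z) = LinearMap.lTensor X (LinearMap.mulLeft A u) (e z) := by
    intro z
    induction z using TensorProduct.induction_on with
    | zero => simp
    | tmul x v =>
        induction v using TensorProduct.induction_on with
        | zero => simp
        | tmul c b =>
            have : μ (c ⊗ₜ[A] b) = c ⊗ₜ[A] (u * b) := by
              rw [hμdef, LinearMap.mulLeft_apply, Algebra.TensorProduct.tmul_mul_tmul, one_mul]
            rw [LinearMap.lTensor_tmul, this,
              TensorProduct.AlgebraTensorModule.cancelBaseChange_tmul,
              TensorProduct.AlgebraTensorModule.cancelBaseChange_tmul,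
              LinearMap.lTensor_tmul, LinearMap.mulLeft_apply]
        | add v w hv hw =>
            simp only [TensorProduct.tmul_add, map_add, hv, hw]
    | add z w hz hw => simp only [map_add, hz, hw]
  intro z w h
  have hz' : e (LinearMap.lTensor X μ (e.symm z)) = LinearMap.lTensor X (LinearMap.mulLeft A u) z := by
    rw [hcomm, e.apply_symm_apply]
  have hw' : e (LinearMap.lTensor X μ (e.symm w)) = LinearMap.lTensor X (LinearMap.mulLeft A u) w := by
    rw [hcomm, e.apply_symm_apply]
  have : e.symm z = e.symm w := hinj2 (e.injective (hz'.trans (h.trans hw'.symm)))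
  exact e.symm.injective this


lemma ML (hP : ∀ b : B, u * b ∈ m • (⊤ : Submodule A B) → b ∈ m • (⊤ : Submodule A B))
    (Nid I' : Ideal A) (h1 : I' ≤ Nid) (h2 : ∀ a ∈ m, ∀ n ∈ Nid, a * n ∈ I')
    (b : B) (hb : b ∈ Nid • (⊤ : Submodule A B)) (hub : u * b ∈ I' • (⊤ : Submodule A B)) :
    b ∈ I' • (⊤ : Submodule A B) := by
  classical
  set S : Submodule A Nid := Submodule.comap Nid.subtype I' with hS
  set X := (Nid ⧸ S) with hX
  have htor : Module.IsTorsionBySet A X (m : Set A) := by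
    rw [Module.isTorsionBySet_quotient_iff]
    intro x a ha
    exact h2 a ha x.1 x.2
  letI : Module k X := htor.module
  haveI : IsScalarTower A k X := htor.isScalarTower
  set j : I' →ₗ[A] Nid := Submodule.inclusion h1 with hj
  have hrange : LinearMap.range j = S := Submodule.range_inclusion _ _ h1
  have exact0 : Function.Exact j S.mkQ := by
    rw [LinearMap.exact_iff, Submodule.ker_mkQ, hrange]
  have exact1 : Function.Exact (j.rTensor B) (S.mkQ.rTensor B) :=
    rTensor_exact B exact0 (Submodule.mkQ_surjective S)
  obtain ⟨x, hx⟩ : ∃ x, iot Nid B x = b := by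
    rw [← range_iot] at hb; exact hb
  obtain ⟨y, hy⟩ : ∃ y, iot I' B y = u * b := by
    rw [← range_iot] at hub; exact hub
  have hxy : LinearMap.lTensor Nid (LinearMap.mulLeft A u) x = j.rTensor B y := by
    apply iot_injective Nid B
    rw [iot_naturality, hx, iot_inclusion h1, hy, LinearMap.mulLeft_apply]
  have hq0 : S.mkQ.rTensor B x = 0 := by
    apply claimC u hP X
    have hcomm2 : ∀ z : Nid ⊗[A] B,
        LinearMap.lTensor X (LinearMap.mulLeft A u) (S.mkQ.rTensor B z)
          = S.mkQ.rTensor B (LinearMap.lTensor Nid (LinearMap.mulLeft A u) z) := by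
      intro z
      induction z using TensorProduct.induction_on with
      | zero => simp
      | tmul n b => rfl
      | add z w hz hw => simp only [map_add, hz, hw]
    rw [hcomm2, hxy, map_zero]
    exact exact1.apply_apply_eq_zero y
  obtain ⟨w, hw⟩ := (exact1 x).mp hq0
  rw [← hx, ← hw, iot_inclusion h1, ← range_iot]
  exact ⟨w, rfl⟩


lemma REG (hP : ∀ b : B, u * b ∈ m • (⊤ : Submodule A B) → b ∈ m • (⊤ : Submodule A B))
    (I : Ideal A) (b : B) (hub : u * b ∈ I • (⊤ : Submodule A B)) :
    b ∈ I • (⊤ : Submodule A B) := by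
  classical
  have hn : ∀ n : ℕ, b ∈ (I ⊔ m ^ n) • (⊤ : Submodule A B) := by
    intro n
    induction n with
    | zero =>
        have : (I ⊔ m ^ 0 : Ideal A) = ⊤ := by
          rw [pow_zero, Ideal.one_eq_top, sup_top_eq]
        rw [this, Submodule.top_smul]
        trivial
    | succ n ih =>
        refine ML u hP (I ⊔ m ^ n) (I ⊔ m ^ (n + 1)) ?_ ?_ b ih ?_
        · exact sup_le_sup_left (Ideal.pow_le_pow_right (Nat.le_succ n)) I
        · intro a ha x hx
          rcases Submodule.mem_sup.mp hx with ⟨y, hy, z, hz, rfl⟩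
          rw [mul_add]
          refine Submodule.add_mem _ (Submodule.mem_sup_left (Ideal.mul_mem_left _ _ hy))
            (Submodule.mem_sup_right ?_)
          rw [pow_succ, mul_comm a z]
          exact Ideal.mul_mem_mul hz ha
        · exact Submodule.smul_mono_left le_sup_left hub
  set J : Ideal B := I.map (algebraMap A B) with hJ
  have hmap : Ideal.map (algebraMap A B) m ≤ IsLocalRing.maximalIdeal B := by
    rw [Ideal.map_le_iff_le_comap]
    intro a ha
    simp only [Ideal.mem_comap, IsLocalRing.mem_maximalIdeal, mem_nonunits_iff]
    intro hun
    exact (IsLocalRing.mem_maximalIdeal a).mp ha (IsLocalHom.map_nonunit a hun)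
  have hsub : ∀ n : ℕ, ∀ x : B, x ∈ (I ⊔ m ^ n) • (⊤ : Submodule A B) →
      x ∈ (J ⊔ IsLocalRing.maximalIdeal B ^ n : Ideal B) := by
    intro n x hx
    rw [Ideal.smul_top_eq_map] at hx
    have hx' : x ∈ Ideal.map (algebraMap A B) (I ⊔ m ^ n) := hx
    rw [Ideal.map_sup] at hx'
    refine (sup_le_sup (le_refl J) ?_ : _ ≤ (J ⊔ IsLocalRing.maximalIdeal B ^ n : Ideal B)) hx'
    rw [Ideal.map_pow]
    exact Ideal.pow_right_mono hmap n
  have hbJ : b ∈ J := by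
    have hinf : Ideal.Quotient.mk J b ∈ (⨅ n : ℕ, IsLocalRing.maximalIdeal B ^ n • (⊤ : Submodule B (B ⧸ J))) := by
      rw [Submodule.mem_iInf]
      intro n
      have hbn : b ∈ (J ⊔ IsLocalRing.maximalIdeal B ^ n : Ideal B) := hsub n b (hn n)
      rcases Submodule.mem_sup.mp hbn with ⟨y, hy, z, hz, rfl⟩
      have h1 : Ideal.Quotient.mk J (y + z) = z • (1 : B ⧸ J) := by
        rw [map_add, Ideal.Quotient.eq_zero_iff_mem.mpr hy, zero_add,
          ← Ideal.Quotient.algebraMap_eq, Algebra.algebraMap_eq_smul_one]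
      rw [h1]
      exact Submodule.smul_mem_smul hz trivial
    rw [Ideal.iInf_pow_smul_eq_bot_of_isLocalRing (I := IsLocalRing.maximalIdeal B)
      (M := B ⧸ J) (Ideal.IsMaximal.ne_top (IsLocalRing.maximalIdeal.isMaximal B))] at hinf
    rwa [Submodule.mem_bot, Ideal.Quotient.eq_zero_iff_mem] at hinf
  rw [Ideal.smul_top_eq_map]
  exact hbJ


lemma FLAT (hP : ∀ b : B, u * b ∈ m • (⊤ : Submodule A B) → b ∈ m • (⊤ : Submodule A B)) :
    Module.Flat A (B ⧸ Ideal.span {u}) := by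
  classical
  set C := B ⧸ Ideal.span {u} with hC
  rw [Module.Flat.iff_rTensor_injective']
  intro I
  rw [injective_iff_map_eq_zero]
  intro z hz
  obtain ⟨w, rfl⟩ := LinearMap.lTensor_surjective I
    (g := mkC A u) (Ideal.Quotient.mk_surjective) z
  have h0 : iot I C (LinearMap.lTensor I (mkC A u) w) = 0 := by
    rw [iot_eq]
    simp only [LinearMap.coe_comp, Function.comp_apply, LinearEquiv.coe_coe]
    rw [hz, map_zero]
  rw [iot_naturality] at h0
  have ht : iot I B w ∈ Ideal.span {u} := by
    rw [← Ideal.Quotient.eq_zero_iff_mem]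
    exact h0
  obtain ⟨c, hc⟩ := Ideal.mem_span_singleton'.mp ht
  have huc : u * c ∈ I • (⊤ : Submodule A B) := by
    rw [mul_comm, hc, ← range_iot]
    exact ⟨w, rfl⟩
  obtain ⟨w', hw'⟩ : ∃ w', iot I B w' = c := by
    have := REG u hP I c huc
    rw [← range_iot] at this
    exact this
  have hww : w = LinearMap.lTensor I (LinearMap.mulLeft A u) w' := by
    apply iot_injective I B
    rw [iot_naturality, hw', LinearMap.mulLeft_apply, mul_comm, hc]
  rw [hww, ← LinearMap.lTensor_comp_apply]
  have hcomp : (mkC A u) ∘ₗ (LinearMap.mulLeft A u) = 0 := by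
    ext x
    exact mkC_mul_eq_zero A u x
  rw [hcomp, LinearMap.lTensor_zero, LinearMap.zero_apply]

lemma dir1 (hu : u ∈ nonZeroDivisors B) (hflat : Module.Flat A (B ⧸ Ideal.span {u}))
    (b : B) (hub : u * b ∈ m • (⊤ : Submodule A B)) : b ∈ m • (⊤ : Submodule A B) := by
  classical
  set C := B ⧸ Ideal.span {u} with hC
  set Su : Submodule A B := (Ideal.span {u}).restrictScalars A with hSu
  have hex : Function.Exact (Su.subtype) (mkC A u) := by
    rw [LinearMap.exact_iff]
    ext x
    simp only [LinearMap.mem_ker, Submodule.range_subtype, hSu]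
    rw [mkC_apply, Ideal.Quotient.eq_zero_iff_mem]
    rfl
  have hexT : Function.Exact (LinearMap.lTensor m Su.subtype) (LinearMap.lTensor m (mkC A u)) :=
    lTensor_exact (m : Ideal A) hex Ideal.Quotient.mk_surjective
  obtain ⟨z, hzb⟩ : ∃ z, iot m B z = u * b := by
    rw [← range_iot] at hub; exact hub
  have hz0 : LinearMap.lTensor m (mkC A u) z = 0 := by
    apply iot_injective m C
    rw [iot_naturality, hzb, map_zero, mkC_mul_eq_zero]
  obtain ⟨w, hw⟩ := (hexT z).mp hz0
  have key : ∀ w : (m : Ideal A) ⊗[A] Su, ∃ y ∈ m • (⊤ : Submodule A B),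
      iot m B (LinearMap.lTensor m Su.subtype w) = u * y := by
    intro w
    induction w using TensorProduct.induction_on with
    | zero => exact ⟨0, Submodule.zero_mem _, by simp⟩
    | tmul a s =>
        obtain ⟨c, hc⟩ := Ideal.mem_span_singleton'.mp (by exact s.2 : (s : B) ∈ Ideal.span {u})
        refine ⟨(a : A) • c, Submodule.smul_mem_smul a.2 trivial, ?_⟩
        simp only [LinearMap.lTensor_tmul, iot_tmul, Submodule.coe_subtype]
        rw [← hc, mul_comm c u, mul_smul_comm]
    | add w₁ w₂ h₁ h₂ =>
        obtain ⟨y₁, hy₁, e₁⟩ := h₁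
        obtain ⟨y₂, hy₂, e₂⟩ := h₂
        exact ⟨y₁ + y₂, Submodule.add_mem _ hy₁ hy₂, by rw [map_add, map_add, e₁, e₂, mul_add]⟩
  obtain ⟨y, hy, hey⟩ := key w
  rw [hw, hzb] at hey
  have : b = y := by
    have h0 : (b - y) * u = 0 := by
      rw [sub_mul, mul_comm b u, mul_comm y u, hey, sub_self]
    have := (mem_nonZeroDivisors_iff_right.mp hu) _ h0
    exact sub_eq_zero.mp this
  rwa [this]


lemma boundary :
    ((u ⊗ₜ[A] (1 : k)) ∈ nonZeroDivisors (B ⊗[A] k)) ↔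
      ∀ b : B, u * b ∈ m • (⊤ : Submodule A B) → b ∈ m • (⊤ : Submodule A B) := by
  classical
  have h1 : ∀ b : B, (TensorProduct.tensorQuotEquivQuotSMul B m) (b ⊗ₜ[A] (1 : k))
      = Submodule.Quotient.mk b := by
    intro b
    rw [show (1 : k) = Ideal.Quotient.mk m 1 from (map_one _).symm]
    unfold TensorProduct.tensorQuotEquivQuotSMul
    simp only [LinearEquiv.trans_apply, TensorProduct.comm_tmul,
      TensorProduct.quotTensorEquivQuotSMul_mk_tmul, one_smul]
  have hzero : ∀ b : B, (b ⊗ₜ[A] (1 : k) = (0 : B ⊗[A] k)) ↔ b ∈ m • (⊤ : Submodule A B) := by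
    intro b
    rw [← Submodule.Quotient.mk_eq_zero, ← h1, LinearEquiv.map_eq_zero_iff]
    rfl
  have hsur : ∀ z : B ⊗[A] k, ∃ b : B, z = b ⊗ₜ[A] (1 : k) := by
    intro z
    obtain ⟨b, hb⟩ := Submodule.Quotient.mk_surjective _
      ((TensorProduct.tensorQuotEquivQuotSMul B m) z)
    exact ⟨b, ((TensorProduct.tensorQuotEquivQuotSMul B m)).injective (by rw [← hb]; exact (h1 b).symm)⟩
  constructor
  · intro hnzd b hub
    have : (u * b) ⊗ₜ[A] (1 : k) = (0 : B ⊗[A] k) := (hzero _).mpr hub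
    have hmul : (b ⊗ₜ[A] (1 : k)) * (u ⊗ₜ[A] (1 : k)) = (u * b) ⊗ₜ[A] (1 : k) := by
      rw [Algebra.TensorProduct.tmul_mul_tmul, one_mul, mul_comm]
    have hb0 : b ⊗ₜ[A] (1 : k) = (0 : B ⊗[A] k) := (mem_nonZeroDivisors_iff_right.mp hnzd) _ (by rw [hmul, this])
    exact (hzero b).mp hb0
  · intro hP
    rw [mem_nonZeroDivisors_iff_right]
    intro z hz
    obtain ⟨b, rfl⟩ := hsur z
    have : (u * b) ⊗ₜ[A] (1 : k) = (0 : B ⊗[A] k) := by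
      rw [← hz, Algebra.TensorProduct.tmul_mul_tmul, one_mul, mul_comm]
    exact (hzero b).mpr (hP b ((hzero _).mp this))

end Main

theorem local_criterion_nonzerodivisor_flat (A B : Type*) [CommRing A] [CommRing B]
    [IsNoetherianRing A] [IsNoetherianRing B] [IsLocalRing A] [IsLocalRing B]
    [Algebra A B] [IsLocalHom (algebraMap A B)] [Module.Flat A B] (u : B) :
    (u ∈ nonZeroDivisors B ∧ Module.Flat A (B ⧸ Ideal.span {u})) ↔
      (u ⊗ₜ[A] (1 : IsLocalRing.ResidueField A)) ∈
        nonZeroDivisors (B ⊗[A] IsLocalRing.ResidueField A) := by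
  constructor
  · rintro ⟨hu, hflat⟩
    exact (boundary u).mpr (dir1 u hu hflat)
  · intro h2
    have hP := (boundary u).mp h2
    refine ⟨?_, FLAT u hP⟩
    rw [mem_nonZeroDivisors_iff_right]
    intro z hz
    have h0 : u * z ∈ (⊥ : Ideal A) • (⊤ : Submodule A B) := by
      rw [Submodule.bot_smul, Submodule.mem_bot, mul_comm]
      exact hz
    have hz0 := REG u hP ⊥ z h0
    rwa [Submodule.bot_smul, Submodule.mem_bot] at hz0
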